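/- If the class of Ding projective right R-modules is closed under direct limits (filtered colimits), then R is right perfect, i.e., every flat right R-module is projective. -/

import Mathlib

/-! Preamble: basic notions of relative homological algebra over a
(possibly noncommutative) ring.  Right `R`-modules are modeled as
(left) modules over the opposite ring `Rᵐᵒᵖ`. -/

open CategoryTheory Opposite

noncomputable section

/-- The Ext group `Ext^n(A, B)` in the category of left `S`-modules,
computed as a derived functor (of `ℤ`-modules). -/
def extGroup (S : Type) [Ring S] (n : ℕ) (A B : ModuleCat.{0} S) : Type :=
  ((_root_.Ext ℤ (ModuleCat.{0} S) n).obj (op A)).obj B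

/-- Vanishing of the Ext group `Ext^n(A, B)`. -/
def extVanish (S : Type) [Ring S] (n : ℕ) (A B : ModuleCat.{0} S) : Prop :=
  Subsingleton (extGroup S n A B)

/-- A module `E` is FP-injective if `Ext¹(F, E) = 0` for every finitely
presented module `F`. -/
def FPInjective (S : Type) [Ring S] (E : ModuleCat.{0} S) : Prop :=
  ∀ F : ModuleCat.{0} S, Module.FinitePresentation S F → extVanish S 1 F E

/-- `E` satisfies the Ext-criterion for FP-injective dimension `≤ n`:
`Ext^{n+1}(F, E) = 0` for every finitely presented `F`. -/
def fpInjDimLE (S : Type) [Ring S] (E : ModuleCat.{0} S) (n : ℕ) : Prop :=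
  ∀ F : ModuleCat.{0} S, Module.FinitePresentation S F → extVanish S (n + 1) F E

/-- `E` has FP-injective dimension exactly `n` : `n` is the least natural number
with `Ext^{n+1}(F, E) = 0` for all finitely presented `F`. -/
def fpInjDimEq (S : Type) [Ring S] (E : ModuleCat.{0} S) (n : ℕ) : Prop :=
  fpInjDimLE S E n ∧ ∀ m : ℕ, fpInjDimLE S E m → n ≤ m

/-- `E` has finite FP-injective dimension. -/
def fpInjDimFinite (S : Type) [Ring S] (E : ModuleCat.{0} S) : Prop :=
  ∃ n : ℕ, fpInjDimLE S E n

/-- A ring `S` is left coherent if every finitely generated left ideal is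
finitely presented (as a left `S`-module). -/
def LeftCoherent (S : Type) [Ring S] : Prop :=
  ∀ I : Submodule S S, I.FG → Module.FinitePresentation S I

/-- A ring `S` is right coherent if its opposite ring is left coherent. -/
def RightCoherent (S : Type) [Ring S] : Prop :=
  LeftCoherent Sᵐᵒᵖ

section BTensor

variable (R : Type) [Ring R]

/-- The subgroup of `A ⊗_ℤ B` by which one quotients to obtain the balanced
tensor product `A ⊗_R B` of a right `R`-module `A` and a left `R`-module `B`. -/
def btRel (A : Type) [AddCommGroup A] [Module Rᵐᵒᵖ A]
    (B : Type) [AddCommGroup B] [Module R B] :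
    Submodule ℤ (TensorProduct ℤ A B) :=
  Submodule.span ℤ
    {x | ∃ (a : A) (r : R) (b : B),
      x = (MulOpposite.op r • a) ⊗ₜ[ℤ] b - a ⊗ₜ[ℤ] (r • b)}

/-- The balanced tensor product `A ⊗_R B` of a right `R`-module `A` and a left
`R`-module `B`, defined as a quotient of `A ⊗_ℤ B`. -/
abbrev BTensor (A : Type) [AddCommGroup A] [Module Rᵐᵒᵖ A]
    (B : Type) [AddCommGroup B] [Module R B] : Type :=
  TensorProduct ℤ A B ⧸ btRel R A B

variable {A A' : Type} [AddCommGroup A] [Module Rᵐᵒᵖ A] [AddCommGroup A'] [Module Rᵐᵒᵖ A']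
variable {B B' : Type} [AddCommGroup B] [Module R B] [AddCommGroup B'] [Module R B']

/-- The map `A ⊗_R B → A ⊗_R B'` induced by a map `f : B → B'` of left
`R`-modules. -/
def BTensor.lmap (f : B →ₗ[R] B') (A : Type) [AddCommGroup A] [Module Rᵐᵒᵖ A] :
    BTensor R A B →ₗ[ℤ] BTensor R A B' :=
  Submodule.mapQ (btRel R A B) (btRel R A B')
    (TensorProduct.map LinearMap.id f.toAddMonoidHom.toIntLinearMap)
    (by
      rw [btRel, Submodule.span_le]
      rintro x ⟨a, r, b, rfl⟩
      simp only [SetLike.mem_coe, Submodule.mem_comap, map_sub, TensorProduct.map_tmul,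
        LinearMap.id_apply, AddMonoidHom.coe_toIntLinearMap, LinearMap.toAddMonoidHom_coe,
        map_smul]
      exact Submodule.subset_span ⟨a, r, f b, (by simp : (TensorProduct.map LinearMap.id f.toAddMonoidHom.toIntLinearMap)
        ((MulOpposite.op r • a) ⊗ₜ[ℤ] b - a ⊗ₜ[ℤ] (r • b)) =
        (MulOpposite.op r • a) ⊗ₜ[ℤ] f b - a ⊗ₜ[ℤ] (r • f b))⟩)

/-- The map `A ⊗_R B → A' ⊗_R B` induced by a map `g : A → A'` of right
`R`-modules. -/
def BTensor.rmap (g : A →ₗ[Rᵐᵒᵖ] A') (B : Type) [AddCommGroup B] [Module R B] :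
    BTensor R A B →ₗ[ℤ] BTensor R A' B :=
  Submodule.mapQ (btRel R A B) (btRel R A' B)
    (TensorProduct.map g.toAddMonoidHom.toIntLinearMap LinearMap.id)
    (by
      rw [btRel, Submodule.span_le]
      rintro x ⟨a, r, b, rfl⟩
      simp only [SetLike.mem_coe, Submodule.mem_comap, map_sub, TensorProduct.map_tmul,
        LinearMap.id_apply, AddMonoidHom.coe_toIntLinearMap, LinearMap.toAddMonoidHom_coe,
        map_smul]
      exact Submodule.subset_span ⟨g a, r, b, (by simp : (TensorProduct.map g.toAddMonoidHom.toIntLinearMap LinearMap.id)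
        ((MulOpposite.op r • a) ⊗ₜ[ℤ] b - a ⊗ₜ[ℤ] (r • b)) =
        (MulOpposite.op r • g a) ⊗ₜ[ℤ] b - g a ⊗ₜ[ℤ] (r • b))⟩)

/-- A right `R`-module `A` is flat if the functor `A ⊗_R —` preserves
injectivity of maps of left `R`-modules. -/
def FlatRight (A : ModuleCat.{0} Rᵐᵒᵖ) : Prop :=
  ∀ (B B' : ModuleCat.{0} R) (f : B →ₗ[R] B'),
    Function.Injective f → Function.Injective (BTensor.lmap R f A)

/-- A left `R`-module `B` is flat if the functor `— ⊗_R B` preserves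
injectivity of maps of right `R`-modules. -/
def FlatLeft (B : ModuleCat.{0} R) : Prop :=
  ∀ (A A' : ModuleCat.{0} Rᵐᵒᵖ) (g : A →ₗ[Rᵐᵒᵖ] A'),
    Function.Injective g → Function.Injective (BTensor.rmap R g B)

end BTensor

/-- A module `N` is Ding injective if there is a doubly infinite exact sequence
of injective modules, with `N` as one of the kernels, which stays exact after
applying `Hom(E, —)` for every FP-injective module `E`. -/
def DingInjective (S : Type) [Ring S] (N : ModuleCat.{0} S) : Prop :=
  ∃ (I : ℤ → ModuleCat.{0} S) (d : ∀ n : ℤ, I n →ₗ[S] I (n + 1)),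
    (∀ n, Module.Injective S (I n)) ∧
    (∀ n, Function.Exact (d n) (d (n + 1))) ∧
    Nonempty (N ≃ₗ[S] LinearMap.ker (d 0)) ∧
    (∀ E : ModuleCat.{0} S, FPInjective S E → ∀ n : ℤ,
      Function.Exact (fun g : E →ₗ[S] I n => (d n).comp g)
        (fun g : E →ₗ[S] I (n + 1) => (d (n + 1)).comp g))

/-- A right `R`-module `M` is Ding projective if there is a doubly infinite
exact sequence of projective right modules, with `M` as one of the kernels,
which stays exact after applying `Hom(—, F)` for every flat right module `F`. -/
def DingProjective (R : Type) [Ring R] (M : ModuleCat.{0} Rᵐᵒᵖ) : Prop :=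
  ∃ (P : ℤ → ModuleCat.{0} Rᵐᵒᵖ) (d : ∀ n : ℤ, P n →ₗ[Rᵐᵒᵖ] P (n + 1)),
    (∀ n, Module.Projective Rᵐᵒᵖ (P n)) ∧
    (∀ n, Function.Exact (d n) (d (n + 1))) ∧
    Nonempty (M ≃ₗ[Rᵐᵒᵖ] LinearMap.ker (d 0)) ∧
    (∀ F : ModuleCat.{0} Rᵐᵒᵖ, FlatRight R F → ∀ n : ℤ,
      Function.Exact (fun g : P (n + 1 + 1) →ₗ[Rᵐᵒᵖ] F => g.comp (d (n + 1)))
        (fun g : P (n + 1) →ₗ[Rᵐᵒᵖ] F => g.comp (d n)))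

/-- A right `R`-module `M` is Ding flat if there is a doubly infinite exact
sequence of flat right modules, with `M` as one of the kernels, which stays
exact after applying `— ⊗_R E` for every FP-injective left module `E`. -/
def DingFlat (R : Type) [Ring R] (M : ModuleCat.{0} Rᵐᵒᵖ) : Prop :=
  ∃ (F : ℤ → ModuleCat.{0} Rᵐᵒᵖ) (d : ∀ n : ℤ, F n →ₗ[Rᵐᵒᵖ] F (n + 1)),
    (∀ n, FlatRight R (F n)) ∧
    (∀ n, Function.Exact (d n) (d (n + 1))) ∧
    Nonempty (M ≃ₗ[Rᵐᵒᵖ] LinearMap.ker (d 0)) ∧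
    (∀ E : ModuleCat.{0} R, FPInjective R E → ∀ n : ℤ,
      Function.Exact (BTensor.rmap R (d n) E) (BTensor.rmap R (d (n + 1)) E))

/-- A left `R`-module `M` is Gorenstein flat if there is a doubly infinite
exact sequence of flat left modules, with `M` as one of the kernels, which
stays exact after applying `E ⊗_R —` for every injective right module `E`. -/
def GorensteinFlat (R : Type) [Ring R] (M : ModuleCat.{0} R) : Prop :=
  ∃ (F : ℤ → ModuleCat.{0} R) (d : ∀ n : ℤ, F n →ₗ[R] F (n + 1)),
    (∀ n, FlatLeft R (F n)) ∧
    (∀ n, Function.Exact (d n) (d (n + 1))) ∧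
    Nonempty (M ≃ₗ[R] LinearMap.ker (d 0)) ∧
    (∀ E : ModuleCat.{0} Rᵐᵒᵖ, Module.Injective Rᵐᵒᵖ E → ∀ n : ℤ,
      Function.Exact (BTensor.lmap R (d n) E) (BTensor.lmap R (d (n + 1)) E))

/-- A right `R`-module `M` has flat dimension `≤ n` : there is an exact
resolution `0 → F_n → ⋯ → F_0 → M → 0` by flat right modules (encoded as an
`ℕ`-indexed resolution which vanishes beyond degree `n`). -/
def flatDimLE (R : Type) [Ring R] (M : ModuleCat.{0} Rᵐᵒᵖ) (n : ℕ) : Prop :=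
  ∃ (F : ℕ → ModuleCat.{0} Rᵐᵒᵖ) (d : ∀ k : ℕ, F (k + 1) →ₗ[Rᵐᵒᵖ] F k)
    (ε : F 0 →ₗ[Rᵐᵒᵖ] M),
    (∀ k, FlatRight R (F k)) ∧
    Function.Surjective ε ∧
    Function.Exact (d 0) ε ∧
    (∀ k, Function.Exact (d (k + 1)) (d k)) ∧
    (∀ k, n < k → Subsingleton (F k))

/-- A right `R`-module has finite flat dimension. -/
def flatDimFinite (R : Type) [Ring R] (M : ModuleCat.{0} Rᵐᵒᵖ) : Prop :=
  ∃ n : ℕ, flatDimLE R M n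

/-- A ring `R` is an `n`-FC ring if it is left and right coherent and has left
and right self FP-injective dimension equal to `n`. -/
def IsFCRing (R : Type) [Ring R] (n : ℕ) : Prop :=
  LeftCoherent R ∧ RightCoherent R ∧
    fpInjDimEq R (ModuleCat.of R R) n ∧
    fpInjDimEq Rᵐᵒᵖ (ModuleCat.of Rᵐᵒᵖ Rᵐᵒᵖ) n

/-- A ring is Ding-Chen if it is an `n`-FC ring for some `n`. -/
def IsDingChen (R : Type) [Ring R] : Prop :=
  ∃ n : ℕ, IsFCRing R n

end


noncomputable section
open CategoryTheory Opposite Limits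

section Development
variable (R : Type) [Ring R]
variable {A A' : Type} [AddCommGroup A] [Module Rᵐᵒᵖ A] [AddCommGroup A'] [Module Rᵐᵒᵖ A']
variable {B B' : Type} [AddCommGroup B] [Module R B] [AddCommGroup B'] [Module R B']

-- ######## new development ########
namespace Lz

abbrev bmk (t : TensorProduct ℤ A B) : BTensor R A B := Submodule.Quotient.mk t

theorem lmap_mk (f : B →ₗ[R] B') (a : A) (b : B) :
    BTensor.lmap R f A (bmk R (a ⊗ₜ[ℤ] b)) = bmk R (a ⊗ₜ[ℤ] (f b)) := by
  rfl

theorem mk_rel (a : A) (r : R) (b : B) :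
    bmk R ((MulOpposite.op r • a) ⊗ₜ[ℤ] b) = bmk R (a ⊗ₜ[ℤ] (r • b)) := by
  rw [← sub_eq_zero, ← Submodule.Quotient.mk_sub, Submodule.Quotient.mk_eq_zero]
  exact Submodule.subset_span ⟨a, r, b, rfl⟩

/-- evaluation-type map out of BTensor induced by an additive map B →+ A →+ M
compatible with the R-balancing. -/
def blift {M : Type} [AddCommGroup M]
    (φ : A →+ B →+ M)
    (hφ : ∀ (a : A) (r : R) (b : B), φ (MulOpposite.op r • a) b = φ a (r • b)) :
    BTensor R A B →ₗ[ℤ] M := by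
  refine Submodule.liftQ (btRel R A B)
    (TensorProduct.lift (LinearMap.mk₂ ℤ (fun a b => φ a b)
      (fun a a' b => by simp) (fun z a b => ?_) (fun a b b' => by simp) (fun z a b => ?_))) ?_
  · show φ (z • a) b = z • φ a b
    rw [map_zsmul φ z a]
    simp
  · show φ a (z • b) = z • φ a b
    rw [map_zsmul (φ a) z b]
  · rw [btRel, Submodule.span_le]
    rintro x ⟨a, r, b, rfl⟩
    refine LinearMap.mem_ker.mpr ?_
    exact (map_sub _ _ _).trans ((congrArg₂ (· - ·) (TensorProduct.lift.tmul _ _)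
      (TensorProduct.lift.tmul _ _)).trans (by
        show φ (MulOpposite.op r • a) b - φ a (r • b) = 0
        rw [hφ, sub_self]))

@[simp] theorem blift_mk {M : Type} [AddCommGroup M]
    (φ : A →+ B →+ M)
    (hφ : ∀ (a : A) (r : R) (b : B), φ (MulOpposite.op r • a) b = φ a (r • b))
    (a : A) (b : B) : blift R φ hφ (bmk R (a ⊗ₜ[ℤ] b)) = φ a b := rfl

end Lz

namespace Lz

variable {C : Type} [AddCommGroup C] [Module R C]

set_option maxHeartbeats 1000000 in
/-- right exactness: ker(A ⊗ π) ⊆ im(A ⊗ ker π) for surjective π -/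
theorem ker_lmap_le_range (π : B →ₗ[R] C) (hπ : Function.Surjective π)
    (A : Type) [AddCommGroup A] [Module Rᵐᵒᵖ A] (w : BTensor R A B)
    (hw : BTensor.lmap R π A w = 0) :
    w ∈ LinearMap.range (BTensor.lmap R (LinearMap.ker π).subtype A) := by
  classical
  set K := LinearMap.ker π
  set Rng := LinearMap.range (BTensor.lmap R K.subtype A) with hRng
  let mkT : BTensor R A B →ₗ[ℤ] (BTensor R A B ⧸ Rng) := Rng.mkQ
  have hker : ∀ (a : A) (k : B), k ∈ K → mkT (bmk R (a ⊗ₜ[ℤ] k)) = 0 := by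
    intro a k hk
    rw [Submodule.mkQ_apply, Submodule.Quotient.mk_eq_zero]
    exact ⟨bmk R (a ⊗ₜ[ℤ] (⟨k, hk⟩ : K)), rfl⟩
  have hdiff : ∀ (a : A) (b b' : B), π b = π b' →
      mkT (bmk R (a ⊗ₜ[ℤ] b)) = mkT (bmk R (a ⊗ₜ[ℤ] b')) := by
    intro a b b' hb
    rw [← sub_eq_zero, ← map_sub, ← Submodule.Quotient.mk_sub, ← TensorProduct.tmul_sub]
    exact hker a (b - b') (by simp [K, LinearMap.mem_ker, map_sub, hb])
  let σ : C → B := Function.surjInv hπ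
  have hσ : ∀ c, π (σ c) = c := Function.surjInv_eq hπ
  -- the balanced biadditive map
  let φ : A →+ C →+ (BTensor R A B ⧸ Rng) :=
    { toFun := fun a =>
        { toFun := fun c => mkT (bmk R (a ⊗ₜ[ℤ] σ c))
          map_zero' := by
            have := hker a (σ 0) (by simp [K, LinearMap.mem_ker, hσ])
            simpa using this
          map_add' := by
            intro c c'
            rw [← map_add, ← Submodule.Quotient.mk_add, ← TensorProduct.tmul_add]
            exact hdiff a _ _ (by simp [hσ]) }
      map_zero' := by
        ext c
        simp [TensorProduct.zero_tmul]
      map_add' := by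
        intro a a'
        ext c
        show mkT (bmk R ((a + a') ⊗ₜ[ℤ] σ c))
          = mkT (bmk R (a ⊗ₜ[ℤ] σ c)) + mkT (bmk R (a' ⊗ₜ[ℤ] σ c))
        rw [← map_add, ← Submodule.Quotient.mk_add, ← TensorProduct.add_tmul] }
  have hbal : ∀ (a : A) (r : R) (c : C),
      φ (MulOpposite.op r • a) c = φ a (r • c) := by
    intro a r c
    show mkT (bmk R ((MulOpposite.op r • a) ⊗ₜ[ℤ] σ c)) = mkT (bmk R (a ⊗ₜ[ℤ] σ (r • c)))
    rw [mk_rel]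
    exact hdiff a _ _ (by simp [hσ])
  let s : BTensor R A C →ₗ[ℤ] (BTensor R A B ⧸ Rng) := blift R φ hbal
  have hs : ∀ v : BTensor R A B, s (BTensor.lmap R π A v) = mkT v := by
    intro v
    obtain ⟨t, rfl⟩ := Submodule.Quotient.mk_surjective _ v
    induction t using TensorProduct.induction_on with
    | zero => rw [Submodule.Quotient.mk_zero, map_zero, map_zero, map_zero]
    | tmul a b =>
        show s (BTensor.lmap R π A (bmk R (a ⊗ₜ[ℤ] b))) = mkT (bmk R (a ⊗ₜ[ℤ] b))
        rw [lmap_mk]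
        show mkT (bmk R (a ⊗ₜ[ℤ] σ (π b))) = mkT (bmk R (a ⊗ₜ[ℤ] b))
        exact hdiff a _ _ (by simp [hσ])
    | add t t' ht ht' =>
        have h1 : (Submodule.Quotient.mk (t + t') : BTensor R A B)
            = bmk R t + bmk R t' := by rw [Submodule.Quotient.mk_add]
        rw [h1, map_add, map_add, map_add, ht, ht']
  have := hs w
  rw [hw, map_zero] at this
  have h0 : mkT w = 0 := this.symm
  rwa [Submodule.mkQ_apply, Submodule.Quotient.mk_eq_zero] at h0

end Lz


namespace Lz
/-- coordinate evaluation `M ⊗ (Fin n → R) → M`. -/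
def ev {M : Type} [AddCommGroup M] [Module Rᵐᵒᵖ M] {n : ℕ} (i : Fin n) :
    BTensor R M (Fin n → R) →ₗ[ℤ] M :=
  blift R
    { toFun := fun m =>
        { toFun := fun g => MulOpposite.op (g i) • m
          map_zero' := by simp
          map_add' := fun g g' => by simp [op_add, add_smul] }
      map_zero' := by ext g; simp
      map_add' := fun m m' => by ext g; simp [smul_add] }
    (by
      intro m r g
      show MulOpposite.op ((g i : R)) • (MulOpposite.op r • m) = MulOpposite.op (((r • g) i : R)) • m
      rw [smul_smul, ← MulOpposite.op_mul]
      rfl)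

@[simp] theorem ev_mk {M : Type} [AddCommGroup M] [Module Rᵐᵒᵖ M] {n : ℕ} (i : Fin n)
    (m : M) (g : Fin n → R) : ev R i (bmk R (m ⊗ₜ[ℤ] g)) = MulOpposite.op (g i) • m := rfl

set_option maxHeartbeats 1000000 in
/-- Equational criterion for flatness. -/
theorem ec (M : ModuleCat.{0} Rᵐᵒᵖ) (hM : FlatRight R M) {n : ℕ}
    (f : Fin n → R) (x : Fin n → M)
    (hx : ∑ i, MulOpposite.op (f i) • x i = 0) :
    ∃ (κ : Type) (_ : Fintype κ) (y : κ → M) (a : κ → Fin n → R),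
      (∀ i, x i = ∑ t, MulOpposite.op (a t i) • y t) ∧ (∀ t, ∑ i, a t i * f i = 0) := by
  classical
  set I : Submodule R R := Submodule.span R (Set.range f) with hI
  -- the left-linear map (Fin n → R) → R, g ↦ ∑ g i * f i
  let π₀ : (Fin n → R) →ₗ[R] R :=
    { toFun := fun g => ∑ i, g i * f i
      map_add' := fun g g' => by simp [add_mul, Finset.sum_add_distrib]
      map_smul' := fun r g => by simp [Finset.mul_sum, mul_assoc] }
  have hπ₀ : ∀ g, π₀ g ∈ I := by
    intro g
    show ∑ i, g i * f i ∈ I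
    apply Submodule.sum_mem
    intro i _
    have : f i ∈ I := Submodule.subset_span ⟨i, rfl⟩
    simpa [smul_eq_mul] using I.smul_mem (g i) this
  let π : (Fin n → R) →ₗ[R] I := π₀.codRestrict I hπ₀
  have hπsurj : Function.Surjective π := by
    rintro ⟨c, hc⟩
    rw [hI] at hc
    obtain ⟨g, hg⟩ := (Submodule.mem_span_range_iff_exists_fun R).mp hc
    refine ⟨fun i => g i, Subtype.ext ?_⟩
    show ∑ i, g i * f i = c
    rw [← hg]
    rfl
  have hπe : ∀ i, ((π (Pi.single i 1) : I) : R) = f i := by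
    intro i
    show ∑ j, (Pi.single i (1:R) : Fin n → R) j * f j = f i
    rw [Finset.sum_eq_single i]
    · simp
    · intro j _ hj; simp [Pi.single_apply, hj]
    · intro hi; exact absurd (Finset.mem_univ i) hi
  -- the element x̃
  set xt : BTensor R M (Fin n → R) :=
    ∑ i, bmk R ((x i) ⊗ₜ[ℤ] (Pi.single i (1:R))) with hxt
  -- its image in M ⊗ I is killed by M ⊗ R
  have h1 : BTensor.lmap R (I.subtype) M (BTensor.lmap R π M xt) = 0 := by
    rw [hxt, map_sum, map_sum]
    have : ∀ i, BTensor.lmap R (I.subtype) M (BTensor.lmap R π M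
        (bmk R ((x i) ⊗ₜ[ℤ] (Pi.single i (1:R)))))
        = bmk R ((MulOpposite.op (f i) • x i) ⊗ₜ[ℤ] (1:R)) := by
      intro i
      rw [lmap_mk, lmap_mk]
      show bmk R ((x i) ⊗ₜ[ℤ] ((π (Pi.single i 1) : I) : R)) = _
      rw [hπe i, mk_rel]
      rw [smul_eq_mul, mul_one]
    rw [Finset.sum_congr rfl (fun i _ => this i)]
    have : ∑ i, bmk R ((MulOpposite.op (f i) • x i) ⊗ₜ[ℤ] (1:R))
        = bmk R ((∑ i, MulOpposite.op (f i) • x i) ⊗ₜ[ℤ] (1:R)) := by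
      show ∑ i, (btRel R M R).mkQ ((MulOpposite.op (f i) • x i) ⊗ₜ[ℤ] (1:R))
        = (btRel R M R).mkQ ((∑ i, MulOpposite.op (f i) • x i) ⊗ₜ[ℤ] (1:R))
      rw [← map_sum, TensorProduct.sum_tmul]
    rw [this, hx, TensorProduct.zero_tmul]
    exact (Submodule.Quotient.mk_eq_zero _).mpr (Submodule.zero_mem _)
  -- flatness kills it in M ⊗ I
  have h2 : BTensor.lmap R π M xt = 0 := by
    have hinj := hM (ModuleCat.of R I) (ModuleCat.of R R) I.subtype
      (Subtype.val_injective)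
    apply hinj
    show BTensor.lmap R I.subtype M (BTensor.lmap R π M xt)
      = BTensor.lmap R I.subtype M 0
    rw [map_zero]
    exact h1
  -- so x̃ comes from M ⊗ ker π
  obtain ⟨w, hw⟩ := ker_lmap_le_range R π hπsurj M xt h2
  -- coordinates of x̃
  have hxtc : ∀ i, ev R i xt = x i := by
    intro i
    rw [hxt, map_sum]
    have : ∀ j, ev R i (bmk R ((x j) ⊗ₜ[ℤ] (Pi.single j (1:R))))
        = MulOpposite.op ((Pi.single j (1:R) : Fin n → R) i) • x j := fun j => rfl
    rw [Finset.sum_congr rfl (fun j _ => this j)]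
    rw [Finset.sum_eq_single i]
    · simp
    · intro j _ hj; simp [Pi.single_apply, Ne.symm hj]
    · intro hi; exact absurd (Finset.mem_univ i) hi
  -- analyze w by induction
  have main : ∀ w : BTensor R M (LinearMap.ker π),
      ∃ (κ : Type) (_ : Fintype κ) (y : κ → M) (a : κ → Fin n → R),
        (∀ t, ∑ i, a t i * f i = 0) ∧
        (∀ i, ev R i (BTensor.lmap R (LinearMap.ker π).subtype M w)
          = ∑ t, MulOpposite.op (a t i) • y t) := by
    intro w
    obtain ⟨t, rfl⟩ := Submodule.Quotient.mk_surjective _ w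
    induction t using TensorProduct.induction_on with
    | zero =>
        refine ⟨PEmpty, inferInstance, fun t => 0, fun t => 0, by simp, ?_⟩
        intro i
        rw [Submodule.Quotient.mk_zero, map_zero, map_zero]
        simp
    | tmul m k =>
        refine ⟨PUnit, inferInstance, fun _ => m, fun _ => (k : Fin n → R), ?_, ?_⟩
        · intro t
          have hk : π (k : Fin n → R) = 0 := k.2
          have : π₀ (k : Fin n → R) = 0 := congrArg Subtype.val hk
          exact this
        · intro i
          rw [show (Submodule.Quotient.mk (m ⊗ₜ[ℤ] k) : BTensor R M (LinearMap.ker π))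
            = bmk R (m ⊗ₜ[ℤ] k) from rfl, lmap_mk, ev_mk]
          simp
    | add t t' ht ht' =>
        obtain ⟨κ₁, _, y₁, a₁, hrel₁, hev₁⟩ := ht
        obtain ⟨κ₂, _, y₂, a₂, hrel₂, hev₂⟩ := ht'
        refine ⟨κ₁ ⊕ κ₂, inferInstance, Sum.elim y₁ y₂, Sum.elim a₁ a₂, ?_, ?_⟩
        · rintro (t | t)
          · exact hrel₁ t
          · exact hrel₂ t
        · intro i
          have hsplit : (Submodule.Quotient.mk (t + t') : BTensor R M (LinearMap.ker π))
            = bmk R t + bmk R t' := Submodule.Quotient.mk_add _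
          rw [hsplit, map_add, map_add, hev₁ i, hev₂ i, Fintype.sum_sum_type]
          rfl
  obtain ⟨κ, _, y, a, hrel, hev⟩ := main w
  refine ⟨κ, inferInstance, y, a, ?_, hrel⟩
  intro i
  rw [← hxtc i, ← hw]
  exact hev i

end Lz

namespace Lz

theorem pi_repr {n : ℕ} (g : Fin n → R) :
    ∑ i, MulOpposite.op (g i) • (Pi.single i (1:R) : Fin n → R) = g := by
  funext j
  rw [Finset.sum_apply]
  rw [Finset.sum_eq_single j]
  · simp [MulOpposite.smul_eq_mul_unop]
  · intro i _ hij
    simp [MulOpposite.smul_eq_mul_unop, Pi.single_apply, hij]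
  · intro hj; exact absurd (Finset.mem_univ j) hj

set_option maxHeartbeats 1000000 in
theorem factor_one (M : ModuleCat.{0} Rᵐᵒᵖ) (hM : FlatRight R M) {n : ℕ}
    (v : (Fin n → R) →ₗ[Rᵐᵒᵖ] M) (k : Fin n → R) (hk : v k = 0) :
    ∃ (m : ℕ) (a : (Fin n → R) →ₗ[Rᵐᵒᵖ] (Fin m → R)) (y : (Fin m → R) →ₗ[Rᵐᵒᵖ] M),
      y.comp a = v ∧ a k = 0 := by
  classical
  set x : Fin n → M := fun i => v (Pi.single i 1) with hxdef
  have hx : ∑ i, MulOpposite.op (k i) • x i = 0 := by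
    have : ∑ i, MulOpposite.op (k i) • x i
        = v (∑ i, MulOpposite.op (k i) • (Pi.single i (1:R) : Fin n → R)) := by
      rw [map_sum]
      exact Finset.sum_congr rfl (fun i _ => (map_smul v _ _).symm)
    rw [this, pi_repr, hk]
  obtain ⟨κ, _, y0, a0, hev, hrel⟩ := ec R M hM k x hx
  set m := Fintype.card κ with hm
  set eκ : κ ≃ Fin m := Fintype.equivFin κ with heκ
  set y1 : Fin m → M := fun s => y0 (eκ.symm s) with hy1
  set a1 : Fin m → Fin n → R := fun s => a0 (eκ.symm s) with ha1
  have hev1 : ∀ i, x i = ∑ s, MulOpposite.op (a1 s i) • y1 s := by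
    intro i
    rw [hev i]
    exact (Equiv.sum_comp eκ.symm (fun t => MulOpposite.op (a0 t i) • y0 t)).symm
  have hrel1 : ∀ s, ∑ i, a1 s i * k i = 0 := fun s => hrel (eκ.symm s)
  refine ⟨m,
    { toFun := fun g => fun s => ∑ i, a1 s i * g i
      map_add' := fun g g' => by
        funext s
        simp [mul_add, Finset.sum_add_distrib]
      map_smul' := fun c g => by
        funext s
        show ∑ i, a1 s i * (c • g) i = (c • fun s => ∑ i, a1 s i * g i) s
        simp only [Pi.smul_apply, MulOpposite.smul_eq_mul_unop]
        rw [Finset.sum_mul]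
        exact Finset.sum_congr rfl (fun i _ => (mul_assoc _ _ _).symm) },
    { toFun := fun c => ∑ s, MulOpposite.op (c s) • y1 s
      map_add' := fun c c' => by
        simp [MulOpposite.op_add, add_smul, Finset.sum_add_distrib]
      map_smul' := fun r c => by
        show ∑ s, MulOpposite.op ((r • c) s) • y1 s
          = r • ∑ s, MulOpposite.op (c s) • y1 s
        rw [Finset.smul_sum]
        refine Finset.sum_congr rfl (fun s _ => ?_)
        show MulOpposite.op (c s * MulOpposite.unop r) • y1 s = _
        rw [MulOpposite.op_mul, MulOpposite.op_unop, mul_smul] },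
    ?_, ?_⟩
  · apply LinearMap.ext
    intro g
    show ∑ s, MulOpposite.op (∑ i, a1 s i * g i) • y1 s = v g
    have hvg : v g = ∑ i, MulOpposite.op (g i) • x i := by
      conv_lhs => rw [← pi_repr R g, map_sum]
      exact Finset.sum_congr rfl (fun i _ => map_smul v _ _)
    rw [hvg]
    have : ∀ i, MulOpposite.op (g i) • x i
        = ∑ s, MulOpposite.op (a1 s i * g i) • y1 s := by
      intro i
      rw [hev1 i, Finset.smul_sum]
      refine Finset.sum_congr rfl (fun s _ => ?_)
      rw [smul_smul, ← MulOpposite.op_mul]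
    rw [Finset.sum_congr rfl (fun i _ => this i), Finset.sum_comm]
    refine Finset.sum_congr rfl (fun s _ => ?_)
    rw [← Finset.sum_smul]
    congr 1
    exact map_sum MulOpposite.opAddEquiv _ _
  · funext s
    show ∑ i, a1 s i * k i = 0
    exact hrel1 s

theorem factor_list (M : ModuleCat.{0} Rᵐᵒᵖ) (hM : FlatRight R M) {n : ℕ}
    (v : (Fin n → R) →ₗ[Rᵐᵒᵖ] M) (ks : List (Fin n → R)) (hks : ∀ k ∈ ks, v k = 0) :
    ∃ (m : ℕ) (a : (Fin n → R) →ₗ[Rᵐᵒᵖ] (Fin m → R)) (y : (Fin m → R) →ₗ[Rᵐᵒᵖ] M),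
      y.comp a = v ∧ ∀ k ∈ ks, a k = 0 := by
  induction ks with
  | nil => exact ⟨n, LinearMap.id, v, by ext; rfl, by simp⟩
  | cons k ks ih =>
      obtain ⟨m₁, a₁, y₁, hya₁, hk₁⟩ := ih (fun k' hk' => hks k' (List.mem_cons_of_mem _ hk'))
      have hy₁k : y₁ (a₁ k) = 0 := by
        have : y₁.comp a₁ k = v k := by rw [hya₁]
        rw [LinearMap.comp_apply] at this
        rw [this]
        exact hks k List.mem_cons_self
      obtain ⟨m₂, a₂, y₂, hya₂, hk₂⟩ := factor_one R M hM y₁ (a₁ k) hy₁k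
      refine ⟨m₂, a₂.comp a₁, y₂, ?_, ?_⟩
      · rw [← LinearMap.comp_assoc, hya₂, hya₁]
      · intro k' hk'
        rcases List.mem_cons.mp hk' with h | h
        · rw [LinearMap.comp_apply, h, hk₂]
        · rw [LinearMap.comp_apply, hk₁ k' h, map_zero]

end Lz

namespace Lz
open CategoryTheory Limits

variable (M : ModuleCat.{0} Rᵐᵒᵖ)

/-- index category for Lazard: finite free right modules over `M`. -/
def Jc : Type := Σ n : ℕ, ((Fin n → R) →ₗ[Rᵐᵒᵖ] M)

instance : SmallCategory (Jc R M) where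
  Hom X Y := {φ : (Fin X.1 → R) →ₗ[Rᵐᵒᵖ] (Fin Y.1 → R) // Y.2.comp φ = X.2}
  id X := ⟨LinearMap.id, LinearMap.comp_id _⟩
  comp f g := ⟨g.1.comp f.1, by rw [← LinearMap.comp_assoc, g.2, f.2]⟩
  id_comp f := Subtype.ext (LinearMap.comp_id _)
  comp_id f := Subtype.ext (LinearMap.id_comp _)
  assoc f g h := Subtype.ext (LinearMap.comp_assoc _ _ _).symm

/-- the tautological functor. -/
def FJ : Jc R M ⥤ ModuleCat.{0} Rᵐᵒᵖ where
  obj X := ModuleCat.of Rᵐᵒᵖ (Fin X.1 → R)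
  map {X Y} φ := ModuleCat.ofHom φ.1
  map_id X := rfl
  map_comp f g := rfl

-- inclusion of the first summand
def incl1 (p q : ℕ) : (Fin p → R) →ₗ[Rᵐᵒᵖ] (Fin (p+q) → R) where
  toFun g := fun j => Fin.addCases (fun i => g i) (fun _ => 0) j
  map_add' g g' := by
    funext j
    refine Fin.addCases (fun i => ?_) (fun i => ?_) j <;>
      simp [Fin.addCases_left, Fin.addCases_right]
  map_smul' c g := by
    funext j
    refine Fin.addCases (fun i => ?_) (fun i => ?_) j <;>
      simp [Fin.addCases_left, Fin.addCases_right, MulOpposite.smul_eq_mul_unop]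

def incl2 (p q : ℕ) : (Fin q → R) →ₗ[Rᵐᵒᵖ] (Fin (p+q) → R) where
  toFun g := fun j => Fin.addCases (fun _ => 0) (fun i => g i) j
  map_add' g g' := by
    funext j
    refine Fin.addCases (fun i => ?_) (fun i => ?_) j <;>
      simp [Fin.addCases_left, Fin.addCases_right]
  map_smul' c g := by
    funext j
    refine Fin.addCases (fun i => ?_) (fun i => ?_) j <;>
      simp [Fin.addCases_left, Fin.addCases_right, MulOpposite.smul_eq_mul_unop]

def restr1 (p q : ℕ) : (Fin (p+q) → R) →ₗ[Rᵐᵒᵖ] (Fin p → R) :=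
  LinearMap.funLeft Rᵐᵒᵖ R (Fin.castAdd q)

def restr2 (p q : ℕ) : (Fin (p+q) → R) →ₗ[Rᵐᵒᵖ] (Fin q → R) :=
  LinearMap.funLeft Rᵐᵒᵖ R (Fin.natAdd p)

theorem restr1_incl1 (p q : ℕ) (g : Fin p → R) : restr1 R p q (incl1 R p q g) = g := by
  funext i
  show Fin.addCases (m := p) (n := q) (motive := fun _ => R) (fun i => g i) (fun _ => 0) (Fin.castAdd q i) = g i
  exact Fin.addCases_left i

theorem restr2_incl1 (p q : ℕ) (g : Fin p → R) : restr2 R p q (incl1 R p q g) = 0 := by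
  funext i
  show Fin.addCases (m := p) (n := q) (motive := fun _ => R) (fun i => g i) (fun _ => 0) (Fin.natAdd p i) = 0
  exact Fin.addCases_right i

theorem restr1_incl2 (p q : ℕ) (g : Fin q → R) : restr1 R p q (incl2 R p q g) = 0 := by
  funext i
  show Fin.addCases (m := p) (n := q) (motive := fun _ => R) (fun _ => 0) (fun i => g i) (Fin.castAdd q i) = 0
  exact Fin.addCases_left i

theorem restr2_incl2 (p q : ℕ) (g : Fin q → R) : restr2 R p q (incl2 R p q g) = g := by
  funext i
  show Fin.addCases (m := p) (n := q) (motive := fun _ => R) (fun _ => 0) (fun i => g i) (Fin.natAdd p i) = g i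
  exact Fin.addCases_right i

theorem isFiltered_Jc (hM : FlatRight R M) : IsFiltered (Jc R M) := by
  refine { nonempty := ⟨⟨0, 0⟩⟩, cocone_objs := ?_, cocone_maps := ?_ }
  · intro X Y
    refine ⟨⟨X.1 + Y.1, X.2.comp (restr1 R X.1 Y.1) + Y.2.comp (restr2 R X.1 Y.1)⟩,
      ⟨incl1 R X.1 Y.1, ?_⟩, ⟨incl2 R X.1 Y.1, ?_⟩, trivial⟩
    · apply LinearMap.ext
      intro g
      show X.2 (restr1 R X.1 Y.1 (incl1 R X.1 Y.1 g))
        + Y.2 (restr2 R X.1 Y.1 (incl1 R X.1 Y.1 g)) = X.2 g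
      rw [restr1_incl1, restr2_incl1, map_zero, add_zero]
    · apply LinearMap.ext
      intro g
      show X.2 (restr1 R X.1 Y.1 (incl2 R X.1 Y.1 g))
        + Y.2 (restr2 R X.1 Y.1 (incl2 R X.1 Y.1 g)) = Y.2 g
      rw [restr1_incl2, restr2_incl2, map_zero, zero_add]
  · intro X Y f g
    classical
    set ks : List (Fin Y.1 → R) :=
      (List.finRange X.1).map
        (fun i => f.1 (Pi.single i 1) - g.1 (Pi.single i 1)) with hks
    have hker : ∀ k ∈ ks, Y.2 k = 0 := by
      intro k hk
      rw [hks] at hk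
      obtain ⟨i, _, rfl⟩ := List.mem_map.mp hk
      rw [map_sub]
      have h1 : Y.2 (f.1 (Pi.single i 1)) = X.2 (Pi.single i 1) :=
        congrFun (congrArg (fun (u : _ →ₗ[Rᵐᵒᵖ] M) => (u : _ → M)) f.2) _
      have h2 : Y.2 (g.1 (Pi.single i 1)) = X.2 (Pi.single i 1) :=
        congrFun (congrArg (fun (u : _ →ₗ[Rᵐᵒᵖ] M) => (u : _ → M)) g.2) _
      rw [h1, h2, sub_self]
    obtain ⟨m, a, y, hya, hz⟩ := factor_list R M hM Y.2 ks hker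
    refine ⟨⟨m, y⟩, ⟨a, hya⟩, ?_⟩
    apply Subtype.ext
    apply LinearMap.ext
    intro u
    show a (f.1 u) = a (g.1 u)
    rw [← sub_eq_zero, ← map_sub]
    have he : (f.1 u - g.1 u) = (f.1 - g.1) u := rfl
    have hu : (f.1 - g.1) u
        = ∑ i, MulOpposite.op (u i) • ((f.1 - g.1) (Pi.single i 1)) := by
      conv_lhs => rw [← pi_repr R u, map_sum]
      exact Finset.sum_congr rfl (fun i _ => map_smul _ _ _)
    rw [he, hu, map_sum]
    apply Finset.sum_eq_zero
    intro i _
    rw [map_smul]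
    have hmem : f.1 (Pi.single i 1) - g.1 (Pi.single i 1) ∈ ks :=
      List.mem_map.mpr ⟨i, List.mem_finRange i, rfl⟩
    have he2 : (f.1 - g.1) (Pi.single i 1)
        = f.1 (Pi.single i 1) - g.1 (Pi.single i 1) := rfl
    rw [he2, hz _ hmem, smul_zero]

end Lz

namespace Lz
open CategoryTheory Limits

variable (M : ModuleCat.{0} Rᵐᵒᵖ)

/-- tautological cocone over `FJ` with point `M`. -/
def ccone : Cocone (FJ R M) where
  pt := M
  ι :=
    { app := fun X => ModuleCat.ofHom X.2
      naturality := fun X Y φ => by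
        rw [Functor.const_obj_map]
        show (FJ R M).map φ ≫ ModuleCat.ofHom Y.2 = ModuleCat.ofHom X.2 ≫ 𝟙 M
        rw [Category.comp_id]
        exact ModuleCat.hom_ext φ.2 }

/-- one-generator object hitting `m`. -/
def oneGen (m : M) : Jc R M :=
  ⟨1, { toFun := fun g => MulOpposite.op (g 0) • m
        map_add' := fun g g' => by simp [MulOpposite.op_add, add_smul]
        map_smul' := fun r g => by
          show MulOpposite.op (g 0 * MulOpposite.unop r) • m = _
          rw [MulOpposite.op_mul, MulOpposite.op_unop, mul_smul]
          rfl }⟩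

theorem desc_bijective (hM : FlatRight R M) :
    letI : IsFiltered (Jc R M) := isFiltered_Jc R M hM
    Function.Bijective (colimit.desc (FJ R M) (ccone R M)) := by
  letI : IsFiltered (Jc R M) := isFiltered_Jc R M hM
  constructor
  · -- injective
    have hzero : ∀ w : ↑(colimit (FJ R M)),
        colimit.desc (FJ R M) (ccone R M) w = 0 → w = 0 := by
      intro w hw
      obtain ⟨X, g0, rfl⟩ := Concrete.colimit_exists_rep (FJ R M) w
      change Fin X.1 → R at g0
      have hg0 : X.2 g0 = 0 := by
        have h1 := congrArg (fun f => ModuleCat.Hom.hom f g0) (colimit.ι_desc (ccone R M) X)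
        exact Eq.trans (Eq.symm h1) hw
      obtain ⟨m, a, y, hya, hz⟩ := factor_list R M hM X.2 [g0]
        (by intro k hk; rw [List.mem_singleton.mp hk]; exact hg0)
      have haz : a g0 = 0 := hz g0 (List.mem_singleton.mpr rfl)
      have hwcol := colimit.w (FJ R M) (⟨a, hya⟩ : X ⟶ ⟨m, y⟩)
      have e1 := congrArg (fun f => ModuleCat.Hom.hom f g0) hwcol
      -- e1 : ι ⟨m,y⟩ (a g0) = ι X g0
      have e2 : (colimit.ι (FJ R M) (⟨m, y⟩ : Jc R M)) (a g0)
          = (colimit.ι (FJ R M) (⟨m, y⟩ : Jc R M)) 0 := congrArg _ haz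
      have e3 : (colimit.ι (FJ R M) (⟨m, y⟩ : Jc R M)) (0 : Fin m → R) = 0 :=
        map_zero (colimit.ι (FJ R M) (⟨m, y⟩ : Jc R M)).hom
      exact Eq.trans (Eq.symm e1) (e2.trans e3)
    intro w1 w2 hw
    have h0 : colimit.desc (FJ R M) (ccone R M) (w1 - w2) = 0 := by
      rw [map_sub, hw, sub_self]
    have := hzero _ h0
    rwa [sub_eq_zero] at this
  · -- surjective
    intro m
    let m' : ↑M := m
    refine ⟨colimit.ι (FJ R M) (oneGen R M m') (show (FJ R M).obj (oneGen R M m') from (Pi.single (0 : Fin 1) (1:R) : Fin 1 → R)), ?_⟩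
    have h1 := congrArg (fun f => ModuleCat.Hom.hom f
      (show (FJ R M).obj (oneGen R M m') from (Pi.single (0 : Fin 1) (1:R) : Fin 1 → R))) (colimit.ι_desc (ccone R M) (oneGen R M m'))
    refine Eq.trans h1 ?_
    show MulOpposite.op ((Pi.single (0 : Fin 1) (1:R) : Fin 1 → R) 0) • m' = m
    simp [m']
    exact one_smul _ m

end Lz


/-- `Rᵐᵒᵖ` is free as a right `R`-module, i.e. `R` is free over `Rᵐᵒᵖ`. -/
def e1R (R : Type) [Ring R] : Rᵐᵒᵖ ≃ₗ[Rᵐᵒᵖ] R :=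
  { toFun := MulOpposite.unop, invFun := MulOpposite.op,
    map_add' := fun _ _ => rfl,
    map_smul' := fun s x => by simp [MulOpposite.smul_eq_mul_unop],
    left_inv := fun _ => rfl, right_inv := fun _ => rfl }

theorem projective_free (R : Type) [Ring R] (n : ℕ) :
    Module.Projective Rᵐᵒᵖ (Fin n → R) :=
  Module.Projective.of_basis
    ((Pi.basisFun Rᵐᵒᵖ (Fin n)).map (LinearEquiv.piCongrRight (fun _ => e1R R)))

end Development

section DP
variable (R : Type) [Ring R]

theorem dp_of_proj (M : ModuleCat.{0} Rᵐᵒᵖ) (hM : Module.Projective Rᵐᵒᵖ M) :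
    DingProjective R M := by
  haveI := hM
  refine ⟨fun _ => ModuleCat.of Rᵐᵒᵖ (M × M),
    fun _ => LinearMap.prod (LinearMap.snd Rᵐᵒᵖ M M) 0, fun n => ?_, fun n => ?_, ⟨?_⟩, ?_⟩
  · exact (inferInstance : Module.Projective Rᵐᵒᵖ (M × M))
  · intro y
    constructor
    · intro hy
      have hb : y.2 = 0 := congrArg Prod.fst hy
      refine ⟨(0, y.1), ?_⟩
      show ((y.1 : M), (0 : M)) = y
      rw [← hb]
    · rintro ⟨x, rfl⟩
      show ((0 : M), (0 : M)) = 0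
      rfl
  · refine { toFun := fun m => ⟨(m, 0), ?_⟩,
             invFun := fun p => (p.1 : ↑M × ↑M).1,
             map_add' := fun a b => Subtype.ext ?_,
             map_smul' := fun s a => Subtype.ext ?_,
             left_inv := fun m => rfl,
             right_inv := fun p => Subtype.ext ?_ }
    · show ((0 : M), (0 : M)) = 0
      rfl
    · show ((a + b : M), (0 : M)) = ((a,(0:M)) + (b,(0:M)) : M × M)
      rw [Prod.mk_add_mk, add_zero]
    · show ((s • a : M), (0 : M)) = (s • ((a,(0:M)) : M × M))
      rw [Prod.smul_mk, smul_zero]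
    · show (((p.1 : ↑M × ↑M).1, (0:M)) : M × M) = p.1
      have hp : (((p.1 : ↑M × ↑M).2, (0:M)) : ↑M × ↑M) = ((0 : M × M)) := p.2
      have h2 : (p.1 : ↑M × ↑M).2 = 0 := congrArg Prod.fst hp
      rw [← h2]
  · intro F _ n g
    constructor
    · intro hg
      have hg' : ∀ b : M, g (b, 0) = 0 := by
        intro b
        exact congrFun (congrArg (fun (h : _ →ₗ[Rᵐᵒᵖ] F) => (h : _ → F)) hg) ((0:M), b)
      refine ⟨g.comp (LinearMap.prod 0 (LinearMap.fst Rᵐᵒᵖ M M)), ?_⟩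
      apply LinearMap.ext
      intro x
      show g ((0:M), x.2) = g x
      calc g ((0:M), x.2) = g (x.1, 0) + g ((0:M), x.2) := by rw [hg', zero_add]
        _ = g x := by
            rw [← map_add]
            congr 1
            rw [Prod.mk_add_mk, add_zero, zero_add]
    · rintro ⟨hh, rfl⟩
      apply LinearMap.ext
      intro x
      exact map_zero hh

theorem proj_of_dp_flat (M : ModuleCat.{0} Rᵐᵒᵖ)
    (hdp : DingProjective R M) (hfl : FlatRight R M) : Module.Projective Rᵐᵒᵖ M := by
  obtain ⟨P, d, hproj, hex, ⟨e⟩, hhom⟩ := hdp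
  -- d (-1) maps into ker (d 0)
  have hd10 : ∀ x : P (-1), d 0 (d (-1 : ℤ) x) = 0 := by
    intro x
    exact (hex (-1)).apply_apply_eq_zero x
  let p : P (-1) →ₗ[Rᵐᵒᵖ] LinearMap.ker (d 0) :=
    (d (-1 : ℤ)).codRestrict _ (fun x => LinearMap.mem_ker.mpr (hd10 x))
  let y : P (-1 : ℤ) →ₗ[Rᵐᵒᵖ] M := e.symm.toLinearMap.comp p
  have hy : y.comp (d (-2 : ℤ)) = 0 := by
    apply LinearMap.ext
    intro x
    show e.symm (p (d (-2 : ℤ) x)) = 0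
    have : p (d (-2 : ℤ) x) = 0 := by
      apply Subtype.ext
      show d (-1 : ℤ) (d (-2 : ℤ) x) = 0
      exact (hex (-2)).apply_apply_eq_zero x
    rw [this, map_zero]
  have H := hhom M hfl (-2)
  norm_num at H
  obtain ⟨h', hh'⟩ := (H y).mp hy
  -- h' : P 0 →ₗ M with h' ∘ d (-1) = y
  have key : ∀ z : LinearMap.ker (d 0), h' (z : P 0) = e.symm z := by
    intro z
    have H1 := hex (-1)
    norm_num at H1
    obtain ⟨x, hx⟩ := (H1 (z : P 0)).mp (z.2 : d 0 (z : P 0) = 0)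
    have h1 : h' (z : P 0) = y x := by
      rw [← hx]
      exact congrFun (congrArg (fun (f : _ →ₗ[Rᵐᵒᵖ] M) => (f : _ → M)) hh') x
    rw [h1]
    show e.symm (p x) = e.symm z
    congr 1
    exact Subtype.ext hx
  -- splitting
  haveI := hproj 0
  refine Module.Projective.of_split
    ((LinearMap.ker (d 0)).subtype.comp e.toLinearMap) h' ?_
  apply LinearMap.ext
  intro m
  show h' ((e m : P 0)) = m
  rw [key (e m), LinearEquiv.symm_apply_apply]

end DP
end


/-- If the Ding projective right `R`-modules are closed under
filtered colimits, then `R` is right perfect, i.e. every flat right `R`-module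
is projective. -/
theorem statement7 (R : Type) [Ring R]
    (h : ∀ (J : Type) [SmallCategory J] [IsFiltered J] (F : J ⥤ ModuleCat.{0} Rᵐᵒᵖ),
      (∀ j, DingProjective R (F.obj j)) →
      DingProjective R (Limits.colimit F)) :
    ∀ M : ModuleCat.{0} Rᵐᵒᵖ, FlatRight R M → Module.Projective Rᵐᵒᵖ M := by
  intro M hflat
  letI : IsFiltered (Lz.Jc R M) := Lz.isFiltered_Jc R M hflat
  have hDing : ∀ j, DingProjective R ((Lz.FJ R M).obj j) := by
    intro X
    exact dp_of_proj R _ (by exact projective_free R X.1)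
  have hcol := h (Lz.Jc R M) (Lz.FJ R M) hDing
  have hbij := Lz.desc_bijective R M hflat
  let e : ↑(Limits.colimit (Lz.FJ R M)) ≃ₗ[Rᵐᵒᵖ] ↑M :=
    LinearEquiv.ofBijective
      (Limits.colimit.desc (Lz.FJ R M) (Lz.ccone R M)).hom hbij
  obtain ⟨P, d, hproj, hex, ⟨q⟩, hhom⟩ := hcol
  have hdpM : DingProjective R M := ⟨P, d, hproj, hex, ⟨e.symm.trans q⟩, hhom⟩
  exact proj_of_dp_flat R M hdpM hflat
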